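/- arXiv:0912.0766 — 2 statements merged into one kernel-verified Lean document; each statement's English description precedes it below -/
import Mathlib

section
/- Let f_θ(x) = θ·sin²(πx)/(2π²x²) for θ > 0. Then for every t₀ ∈ ℝ, every t ≥ t₀, and every α > 0, the quantity |∫_{t₀}^{t} f_θ(x)·e^{α(x−t)} dx| ≤ θ/2 < θ. In particular, the integrate-and-fire sampler with threshold θ never fires on this signal. -/
open Real MeasureTheory intervalIntegral

open FourierTransform

noncomputable section

namespace IFNF

/-- sinc squared -/
def g (x : ℝ) : ℝ := Real.sin (π * x) ^ 2 / (π ^ 2 * x ^ 2)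

lemma g_nonneg (x : ℝ) : 0 ≤ g x := div_nonneg (sq_nonneg _) (by positivity)

lemma g_le (x : ℝ) : g x ≤ 2 * (1 + x ^ 2)⁻¹ := by
  rcases eq_or_ne x 0 with rfl | hx
  · simp [g]
  · have hx2 : (0:ℝ) < x ^ 2 := by positivity
    rw [g, div_le_iff₀ (by positivity)]
    have h1 : Real.sin (π * x) ^ 2 ≤ (π * x) ^ 2 := Real.sin_sq_le_sq
    have h2 : Real.sin (π * x) ^ 2 ≤ 1 := Real.sin_sq_le_one _
    have h3 : (1:ℝ) ≤ π ^ 2 := by nlinarith [Real.pi_gt_three]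
    have h4 : (0:ℝ) < 1 + x ^ 2 := by positivity
    rw [mul_comm (2:ℝ), mul_assoc, inv_mul_eq_div, le_div_iff₀ h4]
    nlinarith

lemma g_meas : Measurable g := by
  unfold g; fun_prop

lemma g_integrable : Integrable g := by
  have h2 : Integrable (fun x : ℝ => 2 * (1 + x ^ 2)⁻¹) :=
    integrable_inv_one_add_sq.const_mul 2
  refine h2.mono' g_meas.aestronglyMeasurable ?_
  filter_upwards with x
  rw [Real.norm_eq_abs, _root_.abs_of_nonneg (g_nonneg x)]
  exact g_le x


/-- triangle function -/
def Lam (t : ℝ) : ℂ := ((max (1 - |t|) 0 : ℝ) : ℂ)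

lemma Lam_cont : Continuous Lam := by
  unfold Lam; fun_prop

lemma Lam_eq_zero {t : ℝ} (h : t ∉ Set.Icc (-1:ℝ) 1) : Lam t = 0 := by
  have h1 : 1 < |t| := by
    by_contra hc
    exact h (Set.mem_Icc.2 (abs_le.1 (not_lt.1 hc)))
  simp [Lam, max_eq_right (by linarith : 1 - |t| ≤ 0)]

lemma Lam_integrable : Integrable Lam :=
  Lam_cont.integrable_of_hasCompactSupport
    (HasCompactSupport.intro isCompact_Icc fun _ h => Lam_eq_zero h)


lemma key_antideriv (c : ℂ) (hc : c ≠ 0) (a : ℂ) (x : ℝ) :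
    HasDerivAt (fun v : ℝ => Complex.exp (c * v) * ((a - v) / c + 1 / c ^ 2))
      (Complex.exp (c * x) * (a - x)) x := by
  have hexp : HasDerivAt (fun v : ℝ => Complex.exp (c * v)) (c * Complex.exp (c * x)) x := by
    have h1 : HasDerivAt (fun v : ℝ => c * (v : ℂ)) c x := by
      simpa only [mul_one] using! ((hasDerivAt_id (x : ℂ)).const_mul c).comp_ofReal
    simpa [mul_comm] using! (Complex.hasDerivAt_exp (c * x)).comp x h1
  have hlin : HasDerivAt (fun v : ℝ => (a - (v : ℂ)) / c + 1 / c ^ 2) (-(1 / c)) x := by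
    have h2 : HasDerivAt (fun v : ℝ => a - (v : ℂ)) (-1) x :=
      ((hasDerivAt_id (x : ℂ)).const_sub a).comp_ofReal
    simpa only [neg_div, neg_neg] using (h2.div_const c).add_const (1 / c ^ 2)
  have h3 := hexp.mul hlin
  refine h3.congr_deriv ?_
  field_simp
  ring

lemma fourier_Lam {ξ : ℝ} (hξ : ξ ≠ 0) : (𝓕 Lam) ξ = ((g ξ : ℝ) : ℂ) := by
  set c : ℂ := ((-2 * π * ξ : ℝ) : ℂ) * Complex.I with hc
  have hπ := Real.pi_ne_zero
  have hr : (-2 * π * ξ : ℝ) ≠ 0 := by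
    simp [hπ, hξ]
  have hcne : c ≠ 0 := mul_ne_zero (by exact_mod_cast hr) Complex.I_ne_zero
  clear_value c
  have hcont : Continuous (fun v : ℝ => Complex.exp (c * v) * Lam v) := by
    exact (Complex.continuous_exp.comp (continuous_const.mul Complex.continuous_ofReal)).mul
      Lam_cont
  have h0 : (𝓕 Lam) ξ = ∫ v : ℝ, Complex.exp (c * v) * Lam v := by
    rw [Real.fourier_real_eq_integral_exp_smul]
    congr 1; funext v
    rw [smul_eq_mul]
    have hv : ((-2 * π * v * ξ : ℝ) : ℂ) * Complex.I = c * v := by rw [hc]; push_cast; ring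
    rw [hv]
  have h1 : (∫ v : ℝ, Complex.exp (c * v) * Lam v)
      = ∫ v in (-1:ℝ)..1, Complex.exp (c * v) * Lam v := by
    rw [intervalIntegral.integral_of_le (by norm_num : (-1:ℝ) ≤ 1),
      ← MeasureTheory.integral_Icc_eq_integral_Ioc]
    exact (setIntegral_eq_integral_of_forall_compl_eq_zero fun v hv => by
      rw [Lam_eq_zero hv, mul_zero]).symm
  have hsplit : (∫ v in (-1:ℝ)..1, Complex.exp (c * v) * Lam v)
      = (∫ v in (-1:ℝ)..0, Complex.exp (c * v) * Lam v)
        + ∫ v in (0:ℝ)..1, Complex.exp (c * v) * Lam v :=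
    (intervalIntegral.integral_add_adjacent_intervals
      (hcont.intervalIntegrable _ _) (hcont.intervalIntegrable _ _)).symm
  have hI2 : (∫ v in (0:ℝ)..1, Complex.exp (c * v) * Lam v)
      = Complex.exp c / c ^ 2 - 1 / c - 1 / c ^ 2 := by
    have he : (∫ v in (0:ℝ)..1, Complex.exp (c * v) * Lam v)
        = ∫ v in (0:ℝ)..1, Complex.exp (c * v) * ((1:ℂ) - v) := by
      apply intervalIntegral.integral_congr
      intro v hv
      rw [Set.uIcc_of_le (by norm_num : (0:ℝ) ≤ 1), Set.mem_Icc] at hv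
      have : |v| = v := abs_of_nonneg hv.1
      simp only [Lam, this, max_eq_left (by linarith [hv.2] : (0:ℝ) ≤ 1 - v)]
      push_cast
      ring
    rw [he, intervalIntegral.integral_eq_sub_of_hasDerivAt
      (fun x _ => key_antideriv c hcne 1 x)
      (((Complex.continuous_exp.comp (continuous_const.mul Complex.continuous_ofReal)).mul
        (by fun_prop)).intervalIntegrable _ _)]
    push_cast
    rw [mul_one]
    field_simp
    rw [mul_zero, Complex.exp_zero]
    ring
  have hI1 : (∫ v in (-1:ℝ)..0, Complex.exp (c * v) * Lam v)
      = 1 / c - 1 / c ^ 2 + Complex.exp (-c) / c ^ 2 := by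
    have he : (∫ v in (-1:ℝ)..0, Complex.exp (c * v) * Lam v)
        = ∫ v in (-1:ℝ)..0, -(Complex.exp (c * v) * ((-1:ℂ) - v)) := by
      apply intervalIntegral.integral_congr
      intro v hv
      rw [Set.uIcc_of_le (by norm_num : (-1:ℝ) ≤ 0), Set.mem_Icc] at hv
      have : |v| = -v := abs_of_nonpos hv.2
      simp only [Lam, this, max_eq_left (by linarith [hv.1] : (0:ℝ) ≤ 1 - -v)]
      push_cast
      ring
    rw [he, intervalIntegral.integral_neg, intervalIntegral.integral_eq_sub_of_hasDerivAt
      (fun x _ => key_antideriv c hcne (-1) x)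
      (((Complex.continuous_exp.comp (continuous_const.mul Complex.continuous_ofReal)).mul
        (by fun_prop)).intervalIntegrable _ _)]
    have hmc : c * ((-1 : ℝ) : ℂ) = -c := by push_cast; ring
    rw [hmc]
    push_cast
    field_simp
    rw [mul_zero, Complex.exp_zero]
    ring
  have hsum : Complex.exp c + Complex.exp (-c) = ((2 * Real.cos (2 * π * ξ) : ℝ) : ℂ) := by
    rw [hc]
    rw [show -(((-2 * π * ξ : ℝ) : ℂ) * Complex.I) = ((2 * π * ξ : ℝ) : ℂ) * Complex.I by
      push_cast; ring]
    rw [Complex.exp_mul_I, Complex.exp_mul_I, ← Complex.ofReal_cos, ← Complex.ofReal_sin,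
      ← Complex.ofReal_cos, ← Complex.ofReal_sin,
      show (-2 * π * ξ : ℝ) = -(2 * π * ξ) by ring, Real.cos_neg, Real.sin_neg]
    push_cast
    ring
  have hc2 : c ^ 2 = ((-(4 * π ^ 2 * ξ ^ 2) : ℝ) : ℂ) := by
    rw [hc, mul_pow, Complex.I_sq]
    push_cast
    ring
  rw [h0, h1, hsplit, hI1, hI2]
  have halg : 1 / c - 1 / c ^ 2 + Complex.exp (-c) / c ^ 2
      + (Complex.exp c / c ^ 2 - 1 / c - 1 / c ^ 2)
      = (Complex.exp c + Complex.exp (-c) - 2) / c ^ 2 := by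
    ring
  rw [halg, hsum, hc2]
  rw [show ((2 * Real.cos (2 * π * ξ) : ℝ) : ℂ) - 2
      = ((2 * Real.cos (2 * π * ξ) - 2 : ℝ) : ℂ) by push_cast; ring,
    ← Complex.ofReal_div]
  congr 1
  have hcos : Real.cos (2 * π * ξ) = 1 - 2 * Real.sin (π * ξ) ^ 2 := by
    rw [show 2 * π * ξ = 2 * (π * ξ) by ring, Real.cos_two_mul, Real.cos_sq']
    ring
  rw [hcos, g]
  field_simp
  ring

lemma integral_g : ∫ x : ℝ, g x = 1 := by
  have hgC : Integrable (fun x : ℝ => ((g x : ℝ) : ℂ)) := g_integrable.ofReal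
  have h0 : ∀ᵐ x : ℝ, x ≠ 0 := by
    rw [ae_iff]
    simp only [ne_eq, not_not, Set.setOf_eq_eq_singleton]
    exact Real.volume_singleton
  have heq : (fun ξ : ℝ => ((g ξ : ℝ) : ℂ)) =ᵐ[volume] 𝓕 Lam := by
    filter_upwards [h0] with ξ hξ
    exact (fourier_Lam hξ).symm
  have hFint : Integrable (𝓕 Lam) := hgC.congr heq
  have hinv : (𝓕⁻ (𝓕 Lam)) 0 = Lam 0 :=
    Lam_integrable.fourierInv_fourier_eq hFint Lam_cont.continuousAt
  have hLam0 : Lam 0 = 1 := by simp [Lam]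
  have hlhs : (𝓕⁻ (𝓕 Lam)) 0 = ∫ v : ℝ, (𝓕 Lam) v := by
    rw [Real.fourierInv_eq_fourier_neg, neg_zero,
      Real.fourier_real_eq_integral_exp_smul]
    simp
  have h5 : (∫ v : ℝ, (𝓕 Lam) v) = ((∫ x : ℝ, g x : ℝ) : ℂ) := by
    rw [← MeasureTheory.integral_congr_ae heq]
    exact integral_ofReal (𝕜 := ℂ)
  have h6 : ((∫ x : ℝ, g x : ℝ) : ℂ) = ((1 : ℝ) : ℂ) := by
    rw [← h5, ← hlhs, hinv, hLam0]; norm_num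
  exact_mod_cast h6

end IFNF

end

/-- The signal `f_θ(x) = θ sin²(πx)/(2π²x²)` never makes the integrate-and-fire
sampler fire: for every `t₀`, every `t ≥ t₀` and every leak `α > 0`, the leaky
integral stays bounded by `θ/2 < θ`. -/
theorem if_never_fires (θ : ℝ) (hθ : 0 < θ) (t₀ t α : ℝ) (ht : t₀ ≤ t) (hα : 0 < α) :
    |∫ x in t₀..t, θ * Real.sin (π * x) ^ 2 / (2 * π ^ 2 * x ^ 2) *
      Real.exp (α * (x - t))| ≤ θ / 2 ∧ θ / 2 < θ := by
  refine ⟨?_, by linarith⟩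
  set F : ℝ → ℝ := fun x => θ * Real.sin (π * x) ^ 2 / (2 * π ^ 2 * x ^ 2) *
    Real.exp (α * (x - t)) with hF
  have hFg : ∀ x : ℝ, F x = θ / 2 * IFNF.g x * Real.exp (α * (x - t)) := by
    intro x; rw [hF, IFNF.g]; ring
  have hF0 : ∀ x, 0 ≤ F x := fun x => by
    rw [hFg]
    exact mul_nonneg (mul_nonneg (by positivity) (IFNF.g_nonneg x)) (Real.exp_nonneg _)
  have hFle : ∀ x ∈ Set.Ioc t₀ t, F x ≤ θ / 2 * IFNF.g x := by
    intro x hx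
    rw [hFg]
    have he : Real.exp (α * (x - t)) ≤ 1 := by
      rw [Real.exp_le_one_iff]
      nlinarith [hx.2]
    exact mul_le_of_le_one_right (mul_nonneg (by positivity) (IFNF.g_nonneg x)) he
  have hFm : Measurable F := by
    rw [hF]; fun_prop
  have hgi : Integrable (fun x : ℝ => θ / 2 * IFNF.g x) := IFNF.g_integrable.const_mul _
  have hFint : IntegrableOn F (Set.Ioc t₀ t) := by
    refine (hgi.integrableOn).mono' hFm.aestronglyMeasurable ?_
    filter_upwards [ae_restrict_mem measurableSet_Ioc] with x hx
    rw [Real.norm_eq_abs, _root_.abs_of_nonneg (hF0 x)]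
    exact hFle x hx
  calc |∫ x in t₀..t, F x| = ∫ x in Set.Ioc t₀ t, F x := by
        rw [intervalIntegral.integral_of_le ht, _root_.abs_of_nonneg]
        exact setIntegral_nonneg measurableSet_Ioc fun x _ => hF0 x
    _ ≤ ∫ x in Set.Ioc t₀ t, θ / 2 * IFNF.g x :=
        setIntegral_mono_on hFint hgi.integrableOn measurableSet_Ioc hFle
    _ ≤ ∫ x : ℝ, θ / 2 * IFNF.g x :=
        setIntegral_le_integral hgi (Filter.Eventually.of_forall fun x =>
          mul_nonneg (by positivity) (IFNF.g_nonneg x))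
    _ = θ / 2 := by rw [MeasureTheory.integral_const_mul, IFNF.integral_g, mul_one]
end

section
/- Let f ∈ PW_Ω, α > 0, θ > 0, and v(t) = ∫_{−∞}^{t} f(x)·e^{α(x−t)} dx. Then there is no infinite increasing sequence t₀ < t₁ < … with t_n → ∞ such that |∫_{t_j}^{t_{j+1}} f(x)·e^{α(x−t_{j+1})} dx| = θ for all j. In other words, the integrate-and-fire sampler produces only finitely many firing instants. -/
open Real MeasureTheory FourierTransform Filter intervalIntegral

/-- The integrate-and-fire sampler applied to a bandlimited signal produces only
finitely many firing instants: there is no infinite increasing sequence of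
times, tending to infinity, on which the firing condition holds at every step. -/
theorem if_finitely_many_firings (Ω α θ : ℝ) (hΩ : 0 < Ω) (hα : 0 < α) (hθ : 0 < θ)
    (f : ℝ → ℂ) (hf2 : MemLp f 2)
    (hsupp : Function.support (𝓕 f) ⊆ Set.Icc (-Ω) Ω) :
    ¬ ∃ t : ℕ → ℝ, StrictMono t ∧ Tendsto t atTop atTop ∧
      ∀ j : ℕ, ‖∫ x in (t j)..(t (j + 1)),
        f x * (Real.exp (α * (x - t (j + 1))) : ℂ)‖ = θ := by
  rintro ⟨t, hmono, htop, hfire⟩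
  -- ‖f‖² is integrable
  have hg : Integrable (fun x => ‖f x‖ ^ (2:ℝ)) := by
    simpa using hf2.integrable_norm_rpow two_ne_zero ENNReal.ofNat_ne_top
  -- the L² tail of f tends to zero
  have htail : Tendsto (fun s : ℝ => ∫ x in Set.Ioi s, ‖f x‖ ^ (2:ℝ)) atTop (nhds 0) := by
    have h := tendsto_setIntegral_of_antitone (f := fun x => ‖f x‖ ^ (2:ℝ))
      (μ := volume) (s := fun s : ℝ => Set.Ioi s)
      (fun _ => measurableSet_Ioi) (fun _ _ hij => Set.Ioi_subset_Ioi hij)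
      ⟨0, hg.integrableOn⟩
    have hemp : ⋂ n : ℝ, Set.Ioi n = ∅ := by
      ext x
      simp only [Set.mem_iInter, Set.mem_Ioi, Set.mem_empty_iff_false, iff_false, not_forall,
        not_lt]
      exact ⟨x, le_refl x⟩
    rwa [hemp, Measure.restrict_empty, integral_zero_measure] at h
  obtain ⟨s₀, hs₀⟩ := eventually_atTop.mp
    (htail.eventually_lt_const (show (0:ℝ) < θ^2 * α by positivity))
  obtain ⟨j, hj⟩ := (htop.eventually_ge_atTop s₀).exists
  set a := t j with ha
  set b := t (j+1) with hb
  have hab : a < b := hmono (Nat.lt_succ_self j)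
  haveI hfin : IsFiniteMeasure (volume.restrict (Set.Ioc a b)) :=
    ⟨by rw [Measure.restrict_apply_univ]; exact measure_Ioc_lt_top⟩
  -- step 1: bound the norm of the integral by the integral of norms
  have h1 : ‖∫ x in a..b, f x * (Real.exp (α * (x - b)) : ℂ)‖
      ≤ ∫ x in Set.Ioc a b, ‖f x‖ * Real.exp (α * (x - b)) := by
    refine (intervalIntegral.norm_integral_le_integral_norm hab.le).trans_eq ?_
    rw [intervalIntegral.integral_of_le hab.le]
    refine setIntegral_congr_fun measurableSet_Ioc fun x _ => ?_
    rw [norm_mul, Complex.norm_real, Real.norm_eq_abs, abs_of_pos (Real.exp_pos _)]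
  -- step 2: Cauchy–Schwarz
  have hconj : Real.HolderConjugate 2 2 := Real.holderConjugate_iff.mpr ⟨one_lt_two, by norm_num⟩
  have hmemf : MemLp (fun x => ‖f x‖) (ENNReal.ofReal 2) (volume.restrict (Set.Ioc a b)) := by
    have := (hf2.norm).restrict (μ := volume) (Set.Ioc a b)
    simpa [ENNReal.ofReal_ofNat] using this
  have hmeme : MemLp (fun x => Real.exp (α * (x - b))) (ENNReal.ofReal 2)
      (volume.restrict (Set.Ioc a b)) := by
    refine MemLp.of_bound
      ((Real.continuous_exp.comp (by continuity)).aestronglyMeasurable) 1 ?_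
    filter_upwards [ae_restrict_mem measurableSet_Ioc] with x hx
    rw [Real.norm_eq_abs, abs_of_pos (Real.exp_pos _)]
    exact Real.exp_le_one_iff.mpr (mul_nonpos_of_nonneg_of_nonpos hα.le (by linarith [hx.2]))
  have h2 : ∫ x in Set.Ioc a b, ‖f x‖ * Real.exp (α * (x - b))
      ≤ (∫ x in Set.Ioc a b, ‖f x‖ ^ (2:ℝ)) ^ (1/2:ℝ) *
        (∫ x in Set.Ioc a b, Real.exp (α * (x - b)) ^ (2:ℝ)) ^ (1/2:ℝ) :=
    integral_mul_le_Lp_mul_Lq_of_nonneg hconj (ae_of_all _ fun x => norm_nonneg _)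
      (ae_of_all _ fun x => (Real.exp_pos _).le) hmemf hmeme
  -- step 3: bound the L² tail term
  have hA : ∫ x in Set.Ioc a b, ‖f x‖ ^ (2:ℝ) ≤ θ^2 * α := by
    have hsub : Set.Ioc a b ⊆ Set.Ioi s₀ := fun x hx => lt_of_le_of_lt hj hx.1
    have := setIntegral_mono_set (μ := volume) hg.integrableOn
      (ae_of_all _ fun x => Real.rpow_nonneg (norm_nonneg _) _)
      (HasSubset.Subset.eventuallyLE hsub)
    exact this.trans (hs₀ s₀ le_rfl).le
  -- step 4: compute the exponential factor
  have hB : ∫ x in Set.Ioc a b, Real.exp (α * (x - b)) ^ (2:ℝ) ≤ 1/(2*α) := by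
    have hrw : ∀ x : ℝ, Real.exp (α * (x - b)) ^ (2:ℝ) = Real.exp (2*α*x + -(2*α*b)) := by
      intro x
      rw [← Real.exp_mul]
      ring_nf
    simp_rw [hrw]
    rw [← intervalIntegral.integral_of_le hab.le,
      intervalIntegral.integral_comp_mul_add Real.exp (by positivity : (2*α) ≠ 0) (-(2*α*b)),
      integral_exp]
    have h0 : 2*α*b + -(2*α*b) = 0 := by ring
    rw [h0, Real.exp_zero, smul_eq_mul]
    have hep : 0 < Real.exp (2*α*a + -(2*α*b)) := Real.exp_pos _
    rw [div_eq_inv_mul]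
    have h2α : (0:ℝ) < (2*α)⁻¹ := by positivity
    nlinarith
  -- combine
  have hA0 : 0 ≤ ∫ x in Set.Ioc a b, ‖f x‖ ^ (2:ℝ) :=
    integral_nonneg fun x => Real.rpow_nonneg (norm_nonneg _) _
  have hB0 : 0 ≤ ∫ x in Set.Ioc a b, Real.exp (α * (x - b)) ^ (2:ℝ) :=
    integral_nonneg fun x => Real.rpow_nonneg (Real.exp_pos _).le _
  have hfinal : ‖∫ x in a..b, f x * (Real.exp (α * (x - b)) : ℂ)‖ < θ := by
    refine (h1.trans h2).trans_lt ?_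
    rw [← Real.sqrt_eq_rpow, ← Real.sqrt_eq_rpow, ← Real.sqrt_mul hA0]
    have hle : (∫ x in Set.Ioc a b, ‖f x‖ ^ (2:ℝ)) *
        (∫ x in Set.Ioc a b, Real.exp (α * (x - b)) ^ (2:ℝ)) ≤ θ^2 * α * (1/(2*α)) :=
      mul_le_mul hA hB hB0 (by positivity)
    have heq : θ^2 * α * (1/(2*α)) = θ^2/2 := by field_simp
    have := Real.sqrt_le_sqrt (hle.trans_eq heq)
    refine this.trans_lt ?_
    have hlt : Real.sqrt (θ^2/2) < Real.sqrt (θ^2) :=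
      Real.sqrt_lt_sqrt (by positivity) (by nlinarith)
    rwa [Real.sqrt_sq hθ.le] at hlt
  have := hfire j
  rw [← hb, ← ha] at this
  linarith [this ▸ hfinal]
end
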